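/- In the bipartite case, the span of the vectors w_{x,y} (0 ≤ x ≤ d_1−2, 0 ≤ y ≤ d_2−2) equals T^⊥; that is, Johnston's subspace S_J coincides with the completely entangled subspace S = S_B of Parthasarathy and Bhat. -/

import Mathlib

private lemma hsum1 {m : ℕ} (t : ℕ) (g : Fin m → ℂ) :
    (∑ x : Fin m, if t = (x:ℕ) then g x else 0) = if h : t < m then g ⟨t, h⟩ else 0 := by
  split
  · next h =>
    rw [Finset.sum_eq_single ⟨t, h⟩]
    · simp
    · intro x _ hx
      rw [if_neg]
      intro he
      exact hx (Fin.ext he.symm)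
    · simp
  · next h =>
    apply Finset.sum_eq_zero
    intro x _
    have := x.isLt
    rw [if_neg]; omega

private lemma hsum2 {m : ℕ} (t : ℕ) (g : Fin m → ℂ) :
    (∑ x : Fin m, if t = (x:ℕ) + 1 then g x else 0) =
      if h : 1 ≤ t ∧ t - 1 < m then g ⟨t - 1, h.2⟩ else 0 := by
  split
  · next h =>
    rw [Finset.sum_eq_single ⟨t - 1, h.2⟩]
    · rw [if_pos (show t = ((⟨t - 1, h.2⟩ : Fin m) : ℕ) + 1 by show t = t - 1 + 1; omega)]
    · intro x _ hx
      rw [if_neg]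
      intro he
      refine hx (Fin.ext ?_)
      show (x:ℕ) = t - 1
      omega
    · simp
  · next h =>
    apply Finset.sum_eq_zero
    intro x _
    have := x.isLt
    rw [if_neg]; omega

private lemma euclid_sum_apply {ι κ : Type*} (s : Finset ι)
    (f : ι → EuclideanSpace ℂ κ) (i : κ) :
    (∑ x ∈ s, f x) i = ∑ x ∈ s, f x i := by
  rw [WithLp.ofLp_sum, Finset.sum_apply]

theorem stmt_3 (d₁ d₂ : ℕ) (hd₁ : 2 ≤ d₁) (hd₂ : 2 ≤ d₂)
    (u : ℕ → EuclideanSpace ℂ (Fin d₁ × Fin d₂))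
    (hu : ∀ n, u n = ∑ p ∈ Finset.univ.filter
        (fun p : Fin d₁ × Fin d₂ => (p.1 : ℕ) + (p.2 : ℕ) = n),
      EuclideanSpace.single p (1 : ℂ))
    (w : Fin (d₁ - 1) → Fin (d₂ - 1) → EuclideanSpace ℂ (Fin d₁ × Fin d₂))
    (hw : ∀ x y, w x y =
      EuclideanSpace.single
        (⟨(x : ℕ), lt_of_lt_of_le x.isLt (Nat.sub_le _ _)⟩,
         ⟨(y : ℕ) + 1, by have := y.isLt; omega⟩) (1 : ℂ)
      - EuclideanSpace.single
        (⟨(x : ℕ) + 1, by have := x.isLt; omega⟩,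
         ⟨(y : ℕ), lt_of_lt_of_le y.isLt (Nat.sub_le _ _)⟩) (1 : ℂ)) :
    Submodule.span ℂ {v | ∃ x y, v = w x y} =
      (Submodule.span ℂ (u '' Set.Iic (d₁ + d₂ - 2)))ᗮ := by
  have hun : ∀ n (q : Fin d₁ × Fin d₂),
      (u n) q = if (q.1 : ℕ) + (q.2 : ℕ) = n then 1 else 0 := by
    intro n q
    rw [hu, WithLp.ofLp_sum, Finset.sum_apply]
    simp only [EuclideanSpace.single_apply]
    rw [Finset.sum_ite_eq]
    simp
  apply le_antisymm
  · -- easy direction: span w ⟂ span u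
    have h : Submodule.span ℂ {v | ∃ x y, v = w x y} ⟂
        Submodule.span ℂ (u '' Set.Iic (d₁ + d₂ - 2)) := by
      rw [Submodule.isOrtho_span]
      rintro a ⟨x, y, rfl⟩ b ⟨n, -, rfl⟩
      rw [hw, inner_sub_left, EuclideanSpace.inner_single_left,
        EuclideanSpace.inner_single_left, hun, hun]
      simp only [map_one, one_mul]
      rw [show (x:ℕ) + ((y:ℕ) + 1) = (x:ℕ) + 1 + (y:ℕ) by omega, sub_self]
    exact h
  · -- hard direction
    intro v hv
    set P : ℕ → ℕ → ℂ := fun n k => ∑ p ∈ Finset.univ.filter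
        (fun p : Fin d₁ × Fin d₂ => (p.1 : ℕ) ≤ k ∧ (p.1 : ℕ) + (p.2 : ℕ) = n), v p with hP
    have hS : ∀ n, n ≤ d₁ + d₂ - 2 → (∑ p ∈ Finset.univ.filter
        (fun p : Fin d₁ × Fin d₂ => (p.1 : ℕ) + (p.2 : ℕ) = n), v p) = 0 := by
      intro n hn
      have h0 := (Submodule.mem_orthogonal _ v).1 hv (u n)
        (Submodule.subset_span ⟨n, hn, rfl⟩)
      rw [hu, sum_inner] at h0
      simpa [EuclideanSpace.inner_single_left] using h0
    have hPS : ∀ n k, n ≤ d₁ + d₂ - 2 → (n ≤ k ∨ d₁ - 1 ≤ k) → P n k = 0 := by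
      intro n k hn hk
      simp only [hP]
      rw [show (Finset.univ.filter
          (fun p : Fin d₁ × Fin d₂ => (p.1 : ℕ) ≤ k ∧ (p.1 : ℕ) + (p.2 : ℕ) = n))
          = Finset.univ.filter (fun p : Fin d₁ × Fin d₂ => (p.1 : ℕ) + (p.2 : ℕ) = n) from ?_]
      · exact hS n hn
      · apply Finset.filter_congr
        intro p _
        have h1 := p.1.isLt
        constructor
        · exact fun hh => hh.2
        · intro hh
          exact ⟨by omega, hh⟩
    have hPempty : ∀ n k, k + d₂ ≤ n → P n k = 0 := by
      intro n k hk
      simp only [hP]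
      rw [Finset.filter_false_of_mem, Finset.sum_empty]
      rintro p - ⟨h1, h2⟩
      have := p.2.isLt
      omega
    have hrec : ∀ (a : Fin d₁) (b : Fin d₂), 1 ≤ (a : ℕ) →
        P ((a : ℕ) + (b : ℕ)) (a : ℕ) = P ((a : ℕ) + (b : ℕ)) ((a : ℕ) - 1) + v (a, b) := by
      intro a b ha
      simp only [hP]
      have hset : (Finset.univ.filter (fun p : Fin d₁ × Fin d₂ =>
            (p.1 : ℕ) ≤ (a : ℕ) ∧ (p.1 : ℕ) + (p.2 : ℕ) = (a : ℕ) + (b : ℕ)))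
          = insert (a, b) (Finset.univ.filter (fun p : Fin d₁ × Fin d₂ =>
            (p.1 : ℕ) ≤ (a : ℕ) - 1 ∧ (p.1 : ℕ) + (p.2 : ℕ) = (a : ℕ) + (b : ℕ))) := by
        ext p
        simp only [Finset.mem_filter, Finset.mem_univ, true_and, Finset.mem_insert,
          Prod.ext_iff, Fin.ext_iff]
        omega
      have hnot : (a, b) ∉ (Finset.univ.filter (fun p : Fin d₁ × Fin d₂ =>
            (p.1 : ℕ) ≤ (a : ℕ) - 1 ∧ (p.1 : ℕ) + (p.2 : ℕ) = (a : ℕ) + (b : ℕ))) := by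
        simp only [Finset.mem_filter, Finset.mem_univ, true_and, not_and]
        intro hh
        omega
      rw [hset, Finset.sum_insert hnot]
      exact add_comm _ _
    have hrec0 : ∀ (a : Fin d₁) (b : Fin d₂), (a : ℕ) = 0 →
        P ((a : ℕ) + (b : ℕ)) (a : ℕ) = v (a, b) := by
      intro a b ha
      simp only [hP]
      have hset : (Finset.univ.filter (fun p : Fin d₁ × Fin d₂ =>
            (p.1 : ℕ) ≤ (a : ℕ) ∧ (p.1 : ℕ) + (p.2 : ℕ) = (a : ℕ) + (b : ℕ)))
          = ({(a, b)} : Finset (Fin d₁ × Fin d₂)) := by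
        ext p
        simp only [Finset.mem_filter, Finset.mem_univ, true_and, Finset.mem_singleton,
          Prod.ext_iff, Fin.ext_iff]
        omega
      rw [hset, Finset.sum_singleton]
    set c : Fin (d₁ - 1) → Fin (d₂ - 1) → ℂ :=
      fun x y => P ((x : ℕ) + (y : ℕ) + 1) (x : ℕ) with hc
    have hrep : v = ∑ x : Fin (d₁ - 1), ∑ y : Fin (d₂ - 1), c x y • w x y := by
      ext p
      obtain ⟨a, b⟩ := p
      simp only [euclid_sum_apply, hw, PiLp.smul_apply, PiLp.sub_apply,
        EuclideanSpace.single_apply, smul_eq_mul, Prod.mk.injEq, Fin.ext_iff, Fin.val_mk]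
      simp_rw [mul_sub, mul_ite, mul_one, mul_zero, Finset.sum_sub_distrib, ite_and,
        Finset.sum_ite_irrel, Finset.sum_const_zero, hsum1, hsum2]
      simp only [hc, Fin.val_mk]
      have ha := a.isLt
      have hb := b.isLt
      have hab : (a : ℕ) + (b : ℕ) ≤ d₁ + d₂ - 2 := by omega
      have e1 : (b : ℕ) - 1 < d₂ - 1 := by omega
      have e2 : (a : ℕ) - 1 < d₁ - 1 := by omega
      by_cases h1 : 1 ≤ (a : ℕ)
      · have hr := hrec a b h1
        rw [show (a : ℕ) - 1 + (b : ℕ) + 1 = (a : ℕ) + (b : ℕ) by omega] at *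
        by_cases h2 : 1 ≤ (b : ℕ)
        · rw [show (a : ℕ) + ((b : ℕ) - 1) + 1 = (a : ℕ) + (b : ℕ) by omega] at *
          by_cases h3 : (a : ℕ) < d₁ - 1
          · by_cases h4 : (b : ℕ) < d₂ - 1
            · simp only [h1, h2, h3, h4, e1, e2, true_and, and_true, dite_true, dite_false]
              linear_combination -hr
            · have hz := hPempty ((a : ℕ) + (b : ℕ)) ((a : ℕ) - 1) (by omega)
              simp only [h1, h2, h3, h4, e1, e2, true_and, and_true, dite_true, dite_false]
              linear_combination -hr - hz
          · have hz := hPS ((a : ℕ) + (b : ℕ)) (a : ℕ) hab (Or.inr (by omega))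
            by_cases h4 : (b : ℕ) < d₂ - 1
            · simp only [h1, h2, h3, h4, e1, e2, true_and, and_true, dite_true, dite_false]
              linear_combination hz - hr
            · have hz2 := hPempty ((a : ℕ) + (b : ℕ)) ((a : ℕ) - 1) (by omega)
              simp only [h1, h2, h3, h4, e1, e2, true_and, and_true, dite_true, dite_false]
              linear_combination hz - hz2 - hr
        · -- b = 0
          have h4 : (b : ℕ) < d₂ - 1 := by omega
          have hz := hPS ((a : ℕ) + (b : ℕ)) (a : ℕ) hab (Or.inl (by omega))
          by_cases h3 : (a : ℕ) < d₁ - 1 <;>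
            simp only [h1, h2, h3, h4, e1, e2, true_and, and_true, false_and,
              dite_true, dite_false] <;>
            linear_combination hz - hr
      · -- a = 0
        have hr := hrec0 a b (by omega)
        have h3 : (a : ℕ) < d₁ - 1 := by omega
        by_cases h2 : 1 ≤ (b : ℕ)
        · rw [show (a : ℕ) + ((b : ℕ) - 1) + 1 = (a : ℕ) + (b : ℕ) by omega] at *
          simp only [h1, h2, h3, e1, e2, true_and, and_true, false_and,
            dite_true, dite_false]
          linear_combination -hr
        · have hz := hPS ((a : ℕ) + (b : ℕ)) (a : ℕ) hab (Or.inl (by omega))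
          simp only [h1, h2, h3, e1, e2, true_and, and_true, false_and,
            dite_true, dite_false]
          linear_combination hz - hr
    rw [hrep]
    exact Submodule.sum_mem _ fun x _ => Submodule.sum_mem _ fun y _ =>
      Submodule.smul_mem _ _ (Submodule.subset_span ⟨x, y, rfl⟩)
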